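/- For 4×2 matrices A = (a_{ij}) and B = (b_{ij}) over a commutative ring, let A⋆B be the 4×4 matrix whose i-th row is the Kronecker product (a_{i1}b_{i1}, a_{i2}b_{i1}, a_{i1}b_{i2}, a_{i2}b_{i2}). Then det(A⋆B) = det A_{12}·det A_{34}·det B_{13}·det B_{24} − det A_{13}·det A_{24}·det B_{12}·det B_{34}, where A_{ij} denotes the 2×2 submatrix of A consisting of rows i and j (and similarly for B). -/

import Mathlib

/-- The amalgam of two `4 × 2` matrices: its `i`-th row is the Kronecker tensor
product `(a_{i1}b_{i1}, a_{i2}b_{i1}, a_{i1}b_{i2}, a_{i2}b_{i2})` of the `i`-th rows. -/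
def amalgam42 {R : Type*} [CommRing R] (A B : Matrix (Fin 4) (Fin 2) R) :
    Matrix (Fin 4) (Fin 4) R :=
  Matrix.of fun i k =>
    A i ⟨k.val % 2, by omega⟩ * B i ⟨k.val / 2, by have := k.isLt; omega⟩

theorem stmt_2 {R : Type*} [CommRing R] (A B : Matrix (Fin 4) (Fin 2) R) :
    (amalgam42 A B).det =
      (Matrix.of ![A 0, A 1]).det * (Matrix.of ![A 2, A 3]).det *
        (Matrix.of ![B 0, B 2]).det * (Matrix.of ![B 1, B 3]).det
      - (Matrix.of ![A 0, A 2]).det * (Matrix.of ![A 1, A 3]).det *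
        (Matrix.of ![B 0, B 1]).det * (Matrix.of ![B 2, B 3]).det := by
  simp [amalgam42, Matrix.det_succ_row_zero, Fin.sum_univ_succ, Matrix.det_fin_two, Fin.succAbove, Fin.succ, Fin.ext_iff, show ((3:Fin 4):ℕ) = 3 from rfl, Fin.mk_one, Fin.mk_zero]
  ring
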